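/- In the persuasion instance with special action 0 (sender payoff ε > 0, receiver payoff 0) and regular actions i ∈ [n] (state θ ∈ {1,2}^n uniform product prior; type θ_i=1 gives sender −a_i, receiver a_i; type θ_i=2 gives sender −b_i, receiver b_i), assume a_i + b_i = 1 for every i. Fix any incentive-compatible direct scheme using two signals: σ_+ recommending action 0 and σ_− recommending some regular action. Then the sender's expected payoff from signal σ_− (the probability α_− of σ_− times the sender's conditional expected payoff given σ_−) is at most −1/2. Moreover, if it equals −1/2 exactly, then for every regular action i, both the sender's and the receiver's expected payoff from action i in signal σ_+ (the probability α_+ of σ_+ times the conditional expected payoff of action i given σ_+) equal 0. -/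
import Mathlib


open Finset

namespace SpecialInstance

variable {n : ℕ}

/-- uniform prior on states `{1,2}^n`, encoded as `Fin n → Bool`
(`false` = type 1, `true` = type 2) -/
noncomputable def unif (n : ℕ) : (Fin n → Bool) → ℝ := fun _ => 1 / 2 ^ n

/-- receiver payoff: the special action `none` gives `0`; the regular action `some i`
gives `a i` on type 1 and `b i` on type 2 -/
def rcv (a b : Fin n → ℝ) (θ : Fin n → Bool) : Option (Fin n) → ℝ
  | none => 0
  | some i => if θ i then b i else a i

/-- sender payoff: the special action `none` gives `ε`; regular actions are zero-sum
with the receiver -/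
def snd (a b : Fin n → ℝ) (ε : ℝ) (θ : Fin n → Bool) : Option (Fin n) → ℝ
  | none => ε
  | some i => -(if θ i then b i else a i)

/-- a direct signaling scheme: a distribution over signals (one per action)
for each state -/
def IsScheme (φ : (Fin n → Bool) → Option (Fin n) → ℝ) : Prop :=
  (∀ θ o, 0 ≤ φ θ o) ∧ ∀ θ, ∑ o : Option (Fin n), φ θ o = 1

/-- incentive compatibility -/
def IC (a b : Fin n → ℝ) (φ : (Fin n → Bool) → Option (Fin n) → ℝ) : Prop :=
  ∀ o o' : Option (Fin n),
    ∑ θ : Fin n → Bool, unif n θ * φ θ o * rcv a b θ o' ≤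
      ∑ θ : Fin n → Bool, unif n θ * φ θ o * rcv a b θ o

/-- expected sender utility -/
noncomputable def senderUtil (a b : Fin n → ℝ) (ε : ℝ)
    (φ : (Fin n → Bool) → Option (Fin n) → ℝ) : ℝ :=
  ∑ θ : Fin n → Bool, ∑ o : Option (Fin n), unif n θ * φ θ o * snd a b ε θ o

end SpecialInstance

open SpecialInstance

lemma sum_ite_coord {n : ℕ} (i : Fin n) (x y : ℝ) :
    ∑ θ : Fin n → Bool, (if θ i then y else x) = 2 ^ n * (x + y) / 2 := by
  classical
  have hinv : Function.Involutive
      (fun θ : Fin n → Bool => Function.update θ i (!θ i)) := by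
    intro θ
    funext j
    by_cases h : j = i <;> simp [Function.update_apply, h]
  have h1 : ∑ θ : Fin n → Bool, (if θ i then y else x)
      = ∑ θ : Fin n → Bool, (if θ i then x else y) := by
    refine Fintype.sum_equiv hinv.toPerm _ _ ?_
    intro θ
    by_cases h : θ i <;> simp [Function.Involutive.toPerm, hinv, h]
  have h2 : (∑ θ : Fin n → Bool, (if θ i then y else x))
      + (∑ θ : Fin n → Bool, (if θ i then x else y))
      = (2 ^ n : ℝ) * (x + y) := by
    rw [← Finset.sum_add_distrib]
    have : ∀ θ : Fin n → Bool,
        ((if θ i then y else x) + (if θ i then x else y)) = x + y := by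
      intro θ; by_cases h : θ i <;> simp [h, add_comm]
    rw [Finset.sum_congr rfl (fun θ _ => this θ), Finset.sum_const]
    simp [Fintype.card_fun, nsmul_eq_mul]
    ring
  linarith [h1, h2]

/-- in the special-action instance with `a i + b i = 1` for all `i`,
fix an incentive-compatible two-signal scheme: the signal `none` (`σ₊`) recommends the
special action and the signal `some i0` (`σ₋`) recommends the fixed regular action `i0`.
Then the sender's expected payoff from `σ₋` is at most `−1/2`; and if it equals `−1/2`,
then for every regular action `i` both the sender's and the receiver's expected payoff
from action `i` in signal `σ₊` equal `0`. -/
theorem sender_payoff_from_sigma_minus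
    {n : ℕ} (a b : Fin n → ℝ) (hab : ∀ i, a i + b i = 1)
    (ε : ℝ) (hε : 0 < ε) (i0 : Fin n)
    (φ : (Fin n → Bool) → Option (Fin n) → ℝ)
    (hφ : IsScheme φ)
    -- only the two signals `none` and `some i0` are used:
    (hsupp : ∀ θ, ∀ j : Fin n, j ≠ i0 → φ θ (some j) = 0)
    (hIC : IC a b φ) :
    (∑ θ : Fin n → Bool, unif n θ * φ θ (some i0) * snd a b ε θ (some i0)) ≤ -(1/2) ∧
    ((∑ θ : Fin n → Bool, unif n θ * φ θ (some i0) * snd a b ε θ (some i0)) = -(1/2) →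
      ∀ i : Fin n,
        (∑ θ : Fin n → Bool, unif n θ * φ θ none * rcv a b θ (some i)) = 0 ∧
        (∑ θ : Fin n → Bool, unif n θ * φ θ none * snd a b ε θ (some i)) = 0) := by
  classical
  obtain ⟨hφ0, hφ1⟩ := hφ
  have hsum : ∀ θ, φ θ none + φ θ (some i0) = 1 := by
    intro θ
    have h := hφ1 θ
    rw [Fintype.sum_option] at h
    rwa [Finset.sum_eq_single i0 (fun j _ hj => hsupp θ j hj) (by simp)] at h
  have hprior : ∀ i : Fin n,
      ∑ θ : Fin n → Bool, unif n θ * rcv a b θ (some i) = 1 / 2 := by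
    intro i
    have h : ∑ θ : Fin n → Bool, unif n θ * rcv a b θ (some i)
        = (1 / 2 ^ n) * ∑ θ : Fin n → Bool, (if θ i then b i else a i) := by
      rw [Finset.mul_sum]
      exact Finset.sum_congr rfl (fun θ _ => by simp [unif, rcv])
    rw [h, sum_ite_coord i (a i) (b i), hab i]
    have h2 : (2 : ℝ) ^ n ≠ 0 := by positivity
    field_simp
  have hsplit : ∀ i : Fin n,
      (∑ θ : Fin n → Bool, unif n θ * φ θ none * rcv a b θ (some i))
      + (∑ θ : Fin n → Bool, unif n θ * φ θ (some i0) * rcv a b θ (some i))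
      = 1 / 2 := by
    intro i
    rw [← Finset.sum_add_distrib, ← hprior i]
    refine Finset.sum_congr rfl (fun θ _ => ?_)
    linear_combination (unif n θ * rcv a b θ (some i)) * hsum θ
  have hIC0 : ∀ i : Fin n,
      (∑ θ : Fin n → Bool, unif n θ * φ θ none * rcv a b θ (some i)) ≤ 0 := by
    intro i
    have h := hIC none (some i)
    simpa [rcv] using h
  have hIC1 : ∀ i : Fin n,
      (∑ θ : Fin n → Bool, unif n θ * φ θ (some i0) * rcv a b θ (some i)) ≤
        ∑ θ : Fin n → Bool, unif n θ * φ θ (some i0) * rcv a b θ (some i0) :=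
    fun i => hIC (some i0) (some i)
  have hsnd : ∀ (o : Option (Fin n)) (i : Fin n),
      (∑ θ : Fin n → Bool, unif n θ * φ θ o * snd a b ε θ (some i))
      = -(∑ θ : Fin n → Bool, unif n θ * φ θ o * rcv a b θ (some i)) := by
    intro o i
    rw [← Finset.sum_neg_distrib]
    refine Finset.sum_congr rfl (fun θ _ => ?_)
    simp [snd, rcv]
  constructor
  · rw [hsnd (some i0) i0]
    have h1 := hsplit i0
    have h2 := hIC0 i0
    linarith
  · intro heq i
    rw [hsnd (some i0) i0] at heq
    have hS1 : (∑ θ : Fin n → Bool, unif n θ * φ θ (some i0) * rcv a b θ (some i0))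
        = 1 / 2 := by linarith
    have h1 := hIC0 i
    have h2 := hIC1 i
    have h3 := hsplit i
    have h0 : (∑ θ : Fin n → Bool, unif n θ * φ θ none * rcv a b θ (some i)) = 0 := by
      linarith
    exact ⟨h0, by rw [hsnd none i, h0]; ring⟩
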